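/- Let K be an r×r positive definite symmetric matrix with rational entries and d₁,…,d_r positive rationals. Then the function F(x) = ½ xᵀKx + Σ_{a=1}^r d_a⁻¹ Li₂(exp(−d_a x_a)) on (0,∞)^r has at most one critical point; equivalently, the system of equations f_a = ∏_{b=1}^r (1−f_b)^{κ_{ab}} (a = 1,…,r) has at most one real solution with 0 < f_a < 1 for all a, where K = (κ_{ab}). -/

import Mathlib

open Finset Matrix

theorem stmt9 (r : ℕ) (K : Matrix (Fin r) (Fin r) ℚ) (d : Fin r → ℚ)
    (hd : ∀ a, 0 < d a)
    (hsym : K.transpose = K)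
    (hpos : (K.map fun x : ℚ => (x : ℝ)).PosDef) :
    ∀ f g : Fin r → ℝ,
      (∀ a, 0 < f a ∧ f a < 1) → (∀ a, 0 < g a ∧ g a < 1) →
      (∀ a, f a = ∏ b, (1 - f b) ^ ((K a b : ℝ))) →
      (∀ a, g a = ∏ b, (1 - g b) ^ ((K a b : ℝ))) →
      f = g := by
  intro f g hf hg hef heg
  set M : Matrix (Fin r) (Fin r) ℝ := K.map fun x : ℚ => (x : ℝ) with hM
  -- key computation of M *ᵥ (fun b => -log (1 - h b))
  have key : ∀ h : Fin r → ℝ, (∀ a, 0 < h a ∧ h a < 1) →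
      (∀ a, h a = ∏ b, (1 - h b) ^ ((K a b : ℝ))) →
      ∀ a, (M *ᵥ (fun b => -Real.log (1 - h b))) a = -Real.log (h a) := by
    intro h hh heh a
    have h1 : ∀ b, (0:ℝ) < 1 - h b := fun b => by linarith [(hh b).2]
    simp only [Matrix.mulVec, dotProduct, hM, Matrix.map_apply]
    have : ∀ b, (K a b : ℝ) * (-Real.log (1 - h b))
        = -Real.log ((1 - h b) ^ ((K a b : ℝ))) := by
      intro b
      rw [Real.log_rpow (h1 b)]
      ring
    rw [Finset.sum_congr rfl fun b _ => this b, Finset.sum_neg_distrib,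
      ← Real.log_prod (fun b _ => (Real.rpow_pos_of_pos (h1 b) _).ne'),
      ← heh a]
  by_contra hne
  set x : Fin r → ℝ := fun b => -Real.log (1 - f b) with hx
  set y : Fin r → ℝ := fun b => -Real.log (1 - g b) with hy
  have hxyne : x - y ≠ 0 := by
    intro h0
    apply hne
    funext a
    have : x a = y a := by
      have := congrFun h0 a
      simpa [sub_eq_zero] using this
    have h1f : (0:ℝ) < 1 - f a := by linarith [(hf a).2]
    have h1g : (0:ℝ) < 1 - g a := by linarith [(hg a).2]
    have hlog : Real.log (1 - f a) = Real.log (1 - g a) := by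
      simpa [hx, hy, neg_inj] using this
    have := Real.log_injOn_pos (Set.mem_Ioi.mpr h1f) (Set.mem_Ioi.mpr h1g) hlog
    linarith
  have hposq := hpos.dotProduct_mulVec_pos hxyne
  have hmv : ∀ a, (M *ᵥ (x - y)) a = Real.log (g a) - Real.log (f a) := by
    intro a
    rw [Matrix.mulVec_sub]
    simp only [Pi.sub_apply]
    rw [key f hf hef a, key g hg heg a]
    ring
  have hsum : dotProduct (star (x - y)) (M *ᵥ (x - y)) ≤ 0 := by
    rw [dotProduct]
    apply Finset.sum_nonpos
    intro a _
    rw [hmv a]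
    have h1f : (0:ℝ) < 1 - f a := by linarith [(hf a).2]
    have h1g : (0:ℝ) < 1 - g a := by linarith [(hg a).2]
    have hza : star (x - y) a = Real.log (1 - g a) - Real.log (1 - f a) := by
      simp [hx, hy]
      ring
    rw [hza]
    rcases le_total (f a) (g a) with hle | hle
    · apply mul_nonpos_of_nonpos_of_nonneg
      · have : Real.log (1 - g a) ≤ Real.log (1 - f a) :=
          Real.log_le_log h1g (by linarith)
        linarith
      · have : Real.log (f a) ≤ Real.log (g a) :=
          Real.log_le_log (hf a).1 hle
        linarith
    · apply mul_nonpos_of_nonneg_of_nonpos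
      · have : Real.log (1 - f a) ≤ Real.log (1 - g a) :=
          Real.log_le_log h1f (by linarith)
        linarith
      · have : Real.log (g a) ≤ Real.log (f a) :=
          Real.log_le_log (hg a).1 hle
        linarith
  linarith
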